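/- In G(ℤ,{2,3}), no (1,2,2,2,2)-packing coloring can assign color 1 to two consecutive integers i and i+1. -/

import Mathlib

def distG (t : ℤ) : SimpleGraph ℤ :=
  SimpleGraph.fromRel (fun i j => |i - j| = 2 ∨ |i - j| = t)

lemma adjD (a b : ℤ) (h : a - b = 2 ∨ a - b = 3 ∨ b - a = 2 ∨ b - a = 3) :
    (distG 3).Adj a b := by
  have hne : a ≠ b := by omega
  simp only [distG, SimpleGraph.fromRel_adj]
  refine ⟨hne, ?_⟩
  rcases h with h | h | h | h
  · exact Or.inl (Or.inl (by rw [h]; norm_num))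
  · exact Or.inl (Or.inr (by rw [h]; norm_num))
  · exact Or.inr (Or.inl (by rw [h]; norm_num))
  · exact Or.inr (Or.inr (by rw [h]; norm_num))

lemma dist1 (a b : ℤ) (h : (distG 3).Adj a b) : (distG 3).dist a b ≤ 2 := by
  refine le_trans (SimpleGraph.dist_le h.toWalk) ?_
  simp

lemma dist2 (a b c : ℤ) (h1 : (distG 3).Adj a c) (h2 : (distG 3).Adj c b) :
    (distG 3).dist a b ≤ 2 := by
  refine le_trans (SimpleGraph.dist_le (SimpleGraph.Walk.cons h1 h2.toWalk)) ?_
  simp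

lemma dle (a b : ℤ) (hne : a ≠ b) (h1 : -6 ≤ a - b) (h2 : a - b ≤ 6) :
    (distG 3).dist a b ≤ 2 := by
  have hd : a - b = -6 ∨ a - b = -5 ∨ a - b = -4 ∨ a - b = -3 ∨ a - b = -2 ∨
      a - b = -1 ∨ a - b = 1 ∨ a - b = 2 ∨ a - b = 3 ∨ a - b = 4 ∨ a - b = 5 ∨
      a - b = 6 := by omega
  rcases hd with h | h | h | h | h | h | h | h | h | h | h | h
  · exact dist2 a b (a + 3) (adjD _ _ (by omega)) (adjD _ _ (by omega))
  · exact dist2 a b (a + 2) (adjD _ _ (by omega)) (adjD _ _ (by omega))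
  · exact dist2 a b (a + 2) (adjD _ _ (by omega)) (adjD _ _ (by omega))
  · exact dist1 a b (adjD _ _ (by omega))
  · exact dist1 a b (adjD _ _ (by omega))
  · exact dist2 a b (a - 2) (adjD _ _ (by omega)) (adjD _ _ (by omega))
  · exact dist2 a b (a + 2) (adjD _ _ (by omega)) (adjD _ _ (by omega))
  · exact dist1 a b (adjD _ _ (by omega))
  · exact dist1 a b (adjD _ _ (by omega))
  · exact dist2 a b (a - 2) (adjD _ _ (by omega)) (adjD _ _ (by omega))
  · exact dist2 a b (a - 2) (adjD _ _ (by omega)) (adjD _ _ (by omega))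
  · exact dist2 a b (a - 3) (adjD _ _ (by omega)) (adjD _ _ (by omega))

theorem stmt8 (f : ℤ → Fin 5)
    (hf : ∀ u v : ℤ, u ≠ v → f u = f v →
      ((f u : ℕ) = 0 → ¬ (distG 3).Adj u v) ∧ (1 ≤ (f u : ℕ) → 2 < (distG 3).dist u v)) :
    ∀ i : ℤ, ¬ (f i = 0 ∧ f (i + 1) = 0) := by
  intro i hi
  obtain ⟨h0, h1⟩ := hi
  set v : Fin 5 → ℤ := ![i - 2, i - 1, i + 2, i + 3, i + 4] with hv
  have hne0 : ∀ k : Fin 5, f (v k) ≠ 0 := by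
    intro k hk
    fin_cases k <;> simp only [hv] at hk <;> simp at hk
    · exact (hf (i - 2) i (by omega) (by rw [hk, h0])).1 (by rw [hk]; rfl)
        (adjD _ _ (by omega))
    · exact (hf (i - 1) (i + 1) (by omega) (by rw [hk, h1])).1 (by rw [hk]; rfl)
        (adjD _ _ (by omega))
    · exact (hf (i + 2) i (by omega) (by rw [hk, h0])).1 (by rw [hk]; rfl)
        (adjD _ _ (by omega))
    · exact (hf (i + 3) (i + 1) (by omega) (by rw [hk, h1])).1 (by rw [hk]; rfl)
        (adjD _ _ (by omega))
    · exact (hf (i + 4) (i + 1) (by omega) (by rw [hk, h1])).1 (by rw [hk]; rfl)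
        (adjD _ _ (by omega))
  have hmaps : ∀ k ∈ (Finset.univ : Finset (Fin 5)),
      f (v k) ∈ (Finset.univ : Finset (Fin 5)).erase 0 :=
    fun k _ => Finset.mem_erase.2 ⟨hne0 k, Finset.mem_univ _⟩
  have hcard : ((Finset.univ : Finset (Fin 5)).erase 0).card <
      (Finset.univ : Finset (Fin 5)).card := by decide
  obtain ⟨a, -, b, -, hab, heq⟩ :=
    Finset.exists_ne_map_eq_of_card_lt_of_maps_to hcard hmaps
  have hvab : v a ≠ v b ∧ -6 ≤ v a - v b ∧ v a - v b ≤ 6 := by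
    fin_cases a <;> fin_cases b <;> (try exact absurd rfl hab) <;>
      (refine ⟨?_, ?_, ?_⟩ <;> simp [hv] <;> omega)
  have hd2 : (distG 3).dist (v a) (v b) ≤ 2 := dle _ _ hvab.1 hvab.2.1 hvab.2.2
  have h1le : 1 ≤ (f (v a) : ℕ) := by
    have h := hne0 a
    replace h : (f (v a) : ℕ) ≠ 0 := fun h' => h (Fin.ext h')
    omega
  have := (hf (v a) (v b) hvab.1 heq).2 h1le
  omega
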